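/- In a graph product with shortlex ordering compatible with a total order on vertices, for any subset V' of the vertex set, the shortlex conjugacy normal forms of G_V lying in X_{V'}^* are exactly the shortlex conjugacy normal forms of the subgraph product: SLC(G_V, X_V) \cap X_{V'}^* = SLC(G_{V'}, X_{V'}). -/

import Mathlib

/-- Word length of `g` over a generating subset `X` of a group. -/
noncomputable def wlen {G : Type*} [Group G] (X : Set G) (g : G) : ℕ :=
  sInf {n | ∃ w : List G, w.length = n ∧ (∀ x ∈ w, x ∈ X) ∧ w.prod = g}

/-- The defining commutator relators of a graph product. -/
def gpRels {V : Type*} (Γ : SimpleGraph V) (G : V → Type*) [∀ v, Group (G v)] :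
    Set (Monoid.CoprodI G) :=
  {x | ∃ (v w : V) (a : G v) (b : G w), Γ.Adj v w ∧
    x = Monoid.CoprodI.of a * Monoid.CoprodI.of b *
          (Monoid.CoprodI.of a)⁻¹ * (Monoid.CoprodI.of b)⁻¹}

/-- The graph product of the groups `G v` over the graph `Γ`. -/
abbrev GraphProduct {V : Type*} (Γ : SimpleGraph V) (G : V → Type*) [∀ v, Group (G v)] :
    Type _ :=
  Monoid.CoprodI G ⧸ Subgroup.normalClosure (gpRels Γ G)

/-- The canonical homomorphism from a vertex group into the graph product. -/
def GraphProduct.of {V : Type*} (Γ : SimpleGraph V) (G : V → Type*) [∀ v, Group (G v)]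
    (v : V) : G v →* GraphProduct Γ G :=
  (QuotientGroup.mk' _).comp Monoid.CoprodI.of

/-- The generating set `X_S = ∪_{v ∈ S} X_v` inside the graph product. -/
def XS {V : Type*} (Γ : SimpleGraph V) (G : V → Type*) [∀ v, Group (G v)]
    (X : ∀ v, Set (G v)) (S : Set V) : Set (GraphProduct Γ G) :=
  ⋃ v ∈ S, (GraphProduct.of Γ G v) '' (X v)

/-- The alphabet of letters: a vertex together with a generator of its vertex group. -/
abbrev GPLetter {V : Type*} (G : V → Type*) (X : ∀ v, Set (G v)) : Type _ :=
  Σ v : V, {x : G v // x ∈ X v}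

/-- Evaluation of a word over the alphabet in the graph product. -/
def evalWord {V : Type*} (Γ : SimpleGraph V) (G : V → Type*) [∀ v, Group (G v)]
    (X : ∀ v, Set (G v)) (w : List (GPLetter G X)) : GraphProduct Γ G :=
  (w.map fun a => GraphProduct.of Γ G a.1 a.2.1).prod

/-- The shortlex order on words induced by a strict order `lt` on letters:
shorter words come first, and words of equal length are compared lexicographically. -/
def shortlex {A : Type*} (lt : A → A → Prop) (w u : List A) : Prop :=
  w.length < u.length ∨ (w.length = u.length ∧ List.Lex lt w u)

/-- The order on letters compatible with the total order on `V`: letters with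
smaller support come first, letters with the same support are compared by `r`. -/
def letterLt {V : Type*} [LinearOrder V] (G : V → Type*) (X : ∀ v, Set (G v))
    (r : ∀ v, {x : G v // x ∈ X v} → {x : G v // x ∈ X v} → Prop) :
    GPLetter G X → GPLetter G X → Prop :=
  Sigma.Lex (· < ·) r

/-- The shortlex conjugacy normal forms of the subgraph product `G_{V'}`: words over
the sub-alphabet `X_{V'}` that are shortlex-least among all words over `X_{V'}`
representing elements of the same conjugacy class of `G_{V'}` (conjugacy taken in
the subgroup generated by `X_{V'}`). -/
def SLCwords {V : Type*} [LinearOrder V] (Γ : SimpleGraph V) (G : V → Type*)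
    [∀ v, Group (G v)] (X : ∀ v, Set (G v))
    (r : ∀ v, {x : G v // x ∈ X v} → {x : G v // x ∈ X v} → Prop)
    (V' : Set V) : Set (List (GPLetter G X)) :=
  {w | (∀ a ∈ w, a.1 ∈ V') ∧
    ∀ u : List (GPLetter G X), (∀ a ∈ u, a.1 ∈ V') →
      (∃ g ∈ Subgroup.closure (XS Γ G X V'),
          g * evalWord Γ G X u * g⁻¹ = evalWord Γ G X w) →
      u = w ∨ shortlex (letterLt G X r) w u}

-- retraction
open scoped Classical in
noncomputable def gpRetr {V : Type*} (Γ : SimpleGraph V) (G : V → Type*) [∀ v, Group (G v)]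
    (V' : Set V) : GraphProduct Γ G →* GraphProduct Γ G :=
  QuotientGroup.lift _
    (Monoid.CoprodI.lift fun v => if v ∈ V' then GraphProduct.of Γ G v else 1)
    (by
      refine Subgroup.normalClosure_le_normal ?_
      rintro x ⟨v, w, a, b, hadj, rfl⟩
      rw [SetLike.mem_coe, MonoidHom.mem_ker]
      simp only [map_mul, map_inv, Monoid.CoprodI.lift_of]
      by_cases hv : v ∈ V' <;> by_cases hw : w ∈ V' <;>
        simp only [hv, hw, if_true, if_false, MonoidHom.one_apply, one_mul, mul_one,
          inv_one, mul_inv_cancel, mul_inv_cancel_right] <;>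
      try group
      · show GraphProduct.of Γ G v a * GraphProduct.of Γ G w b *
            (GraphProduct.of Γ G v a)⁻¹ * (GraphProduct.of Γ G w b)⁻¹ = 1
        simp only [GraphProduct.of, MonoidHom.comp_apply, ← map_inv, ← map_mul]
        rw [QuotientGroup.mk'_apply, QuotientGroup.eq_one_iff]
        exact Subgroup.subset_normalClosure ⟨v, w, a, b, hadj, rfl⟩)

open scoped Classical in
theorem gpRetr_of {V : Type*} (Γ : SimpleGraph V) (G : V → Type*) [∀ v, Group (G v)]
    (V' : Set V) (v : V) (x : G v) :
    gpRetr Γ G V' (GraphProduct.of Γ G v x)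
      = if v ∈ V' then GraphProduct.of Γ G v x else 1 := by
  show gpRetr Γ G V' (QuotientGroup.mk (Monoid.CoprodI.of x)) = _
  rw [gpRetr, QuotientGroup.lift_mk, Monoid.CoprodI.lift_of]
  split_ifs <;> rfl

open scoped Classical in
theorem gpRetr_eval {V : Type*} (Γ : SimpleGraph V) (G : V → Type*) [∀ v, Group (G v)]
    (X : ∀ v, Set (G v)) (V' : Set V) (u : List (GPLetter G X)) :
    gpRetr Γ G V' (evalWord Γ G X u)
      = evalWord Γ G X (u.filter fun a => a.1 ∈ V') := by
  induction u with
  | nil => simp [evalWord]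
  | cons a t ih =>
    have h1 : evalWord Γ G X (a :: t)
        = GraphProduct.of Γ G a.1 a.2.1 * evalWord Γ G X t := by
      simp [evalWord]
    rw [h1, map_mul, ih, gpRetr_of, List.filter_cons]
    by_cases h : a.1 ∈ V' <;> simp [h, evalWord]

open scoped Classical in
theorem gpRetr_mem_closure {V : Type*} (Γ : SimpleGraph V) (G : V → Type*) [∀ v, Group (G v)]
    (X : ∀ v, Set (G v)) (hgen : ∀ v, Subgroup.closure (X v) = ⊤) (V' : Set V)
    (g : GraphProduct Γ G) : gpRetr Γ G V' g ∈ Subgroup.closure (XS Γ G X V') := by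
  induction g using QuotientGroup.induction_on with
  | H z =>
    induction z using Monoid.CoprodI.induction_on with
    | one => rw [QuotientGroup.mk_one, map_one]; exact one_mem _
    | mul x y hx hy =>
      rw [QuotientGroup.mk_mul, map_mul]; exact mul_mem hx hy
    | of v x =>
      show gpRetr Γ G V' (GraphProduct.of Γ G v x) ∈ _
      rw [gpRetr_of]
      split_ifs with hv
      · have hx : x ∈ Subgroup.closure (X v) := (hgen v).symm ▸ Subgroup.mem_top x
        have : GraphProduct.of Γ G v x
            ∈ Subgroup.map (GraphProduct.of Γ G v) (Subgroup.closure (X v)) :=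
          Subgroup.mem_map_of_mem _ hx
        rw [MonoidHom.map_closure] at this
        refine Subgroup.closure_mono ?_ this
        intro y hy
        exact Set.mem_biUnion hv hy
      · exact one_mem _

/-- In a graph product over a finite simple graph with shortlex ordering compatible
with a total order on the vertices, for any `V' ⊆ V` the shortlex conjugacy normal
forms of `G_V` lying in `X_{V'}^*` are exactly the shortlex conjugacy normal forms of
the subgraph product: `SLC(G_V, X_V) ∩ X_{V'}^* = SLC(G_{V'}, X_{V'})`. -/
theorem shortlexConjugacyNormalForms_subgraphProduct {V : Type*} [Fintype V]
    [LinearOrder V] (Γ : SimpleGraph V) (G : V → Type*) [∀ v, Group (G v)]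
    (X : ∀ v, Set (G v))
    (hinv : ∀ v, ∀ x ∈ X v, x⁻¹ ∈ X v)
    (hgen : ∀ v, Subgroup.closure (X v) = ⊤)
    (r : ∀ v, {x : G v // x ∈ X v} → {x : G v // x ∈ X v} → Prop)
    (hr : ∀ v, IsStrictTotalOrder {x : G v // x ∈ X v} (r v))
    (V' : Set V) :
    {w | w ∈ SLCwords Γ G X r Set.univ ∧ ∀ a ∈ w, a.1 ∈ V'}
      = SLCwords Γ G X r V' := by
  classical
  have hXS : XS Γ G X V' ⊆ XS Γ G X Set.univ := by
    apply Set.iUnion₂_subset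
    intro v hv
    exact Set.subset_biUnion_of_mem (u := fun v => (GraphProduct.of Γ G v) '' (X v)) (Set.mem_univ v)
  ext w
  simp only [Set.mem_setOf_eq, SLCwords]
  constructor
  · rintro ⟨⟨-, hmin⟩, hw⟩
    refine ⟨hw, fun u hu ⟨g, hg, hcon⟩ => ?_⟩
    exact hmin u (fun a _ => Set.mem_univ _)
      ⟨g, Subgroup.closure_mono hXS hg, hcon⟩
  · rintro ⟨hw, hmin⟩
    refine ⟨⟨fun a _ => Set.mem_univ _, ?_⟩, hw⟩
    rintro u - ⟨g, -, hcon⟩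
    set u' : List (GPLetter G X) := u.filter (fun a => a.1 ∈ V') with hu'
    have hlen : u'.length ≤ u.length := List.length_filter_le _ _
    have hww : (gpRetr Γ G V') (evalWord Γ G X w) = evalWord Γ G X w := by
      rw [gpRetr_eval]
      congr 1
      exact List.filter_eq_self.mpr fun a ha => decide_eq_true (hw a ha)
    have hcon' : gpRetr Γ G V' g * evalWord Γ G X u' * (gpRetr Γ G V' g)⁻¹
        = evalWord Γ G X w := by
      rw [hu', ← gpRetr_eval, ← map_inv, ← map_mul, ← map_mul, hcon, hww]
    have hu'mem : ∀ a ∈ u', a.1 ∈ V' := by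
      intro a ha
      have := List.mem_filter.mp ha
      exact of_decide_eq_true this.2
    rcases hmin u' hu'mem ⟨gpRetr Γ G V' g, gpRetr_mem_closure Γ G X hgen V' g, hcon'⟩
      with h | h
    · -- u' = w
      rcases lt_or_eq_of_le hlen with hlt | heq
      · right; left; rw [← h]; exact hlt
      · left
        have : u' = u := (List.filter_sublist).eq_of_length heq
        rw [← this, h]
    · rcases h with hlt | ⟨hl, hlex⟩
      · right; left; exact lt_of_lt_of_le hlt hlen
      · rcases lt_or_eq_of_le hlen with hlt2 | heq
        · right; left; exact lt_of_le_of_lt (le_of_eq hl) hlt2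
        · have : u' = u := (List.filter_sublist).eq_of_length heq
          right; right; exact ⟨this ▸ hl, this ▸ hlex⟩
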